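/- arXiv:2305.01638 — 2 statements merged into one kernel-verified Lean document; each statement's English description precedes it below -/
import Mathlib

section
/- If f : [0,1) → ℝ is continuous and a_{j,k} = 2^{j/2} ∫_{k/2^j}^{(k+1)/2^j} f(t) dt, then the approximants f̂^{(j)}(t) = Σ_{k=0}^{2^j−1} a_{j,k} φ_{j,k}(t) converge to f uniformly on [0,1) as j → ∞, assuming f extends continuously to [0,1]. -/
open MeasureTheory

noncomputable def haarPhi (t : ℝ) : ℝ := if 0 ≤ t ∧ t < 1 then 1 else 0

noncomputable def phiJK (j : ℕ) (k : ℤ) (t : ℝ) : ℝ :=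
  2 ^ ((j : ℝ) / 2) * haarPhi (2 ^ j * t - k)

/-- If `f` is continuous on `[0,1]` and `a_{j,k} = 2^{j/2} ∫_{k/2^j}^{(k+1)/2^j} f`,
then the approximants `f̂⁽ʲ⁾ = Σ_{k<2^j} a_{j,k} φ_{j,k}` converge to `f` uniformly on
`[0,1)` as `j → ∞`. -/
theorem haar_projection_tendstoUniformly (f : ℝ → ℝ)
    (hf : ContinuousOn f (Set.Icc (0 : ℝ) 1)) :
    TendstoUniformlyOn
      (fun (j : ℕ) (t : ℝ) => ∑ k ∈ Finset.range (2 ^ j),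
        (2 ^ ((j : ℝ) / 2) * ∫ s in ((k : ℝ) / 2 ^ j)..(((k : ℝ) + 1) / 2 ^ j), f s)
          * phiJK j (k : ℤ) t)
      f Filter.atTop (Set.Ico (0 : ℝ) 1) := by
  rw [Metric.tendstoUniformlyOn_iff]
  intro ε hε
  have hUC : UniformContinuousOn f (Set.Icc (0 : ℝ) 1) :=
    isCompact_Icc.uniformContinuousOn_of_continuous hf
  rw [Metric.uniformContinuousOn_iff] at hUC
  obtain ⟨δ, hδ, hδf⟩ := hUC (ε / 2) (by linarith)
  obtain ⟨N, hN⟩ := pow_unbounded_of_one_lt (1 / δ) (one_lt_two (α := ℝ))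
  rw [Filter.eventually_atTop]
  refine ⟨N, fun j hj t ht => ?_⟩
  obtain ⟨ht0, ht1⟩ := ht
  have h2j : (0 : ℝ) < 2 ^ j := by positivity
  have hsmall : (1 : ℝ) / 2 ^ j < δ := by
    rw [div_lt_iff₀ h2j]
    have h1 : (1 : ℝ) < δ * 2 ^ N := by
      rw [div_lt_iff₀ hδ] at hN; linarith [hN]
    have h2 : (2 : ℝ) ^ N ≤ 2 ^ j := by
      exact pow_le_pow_right₀ (by norm_num) hj
    nlinarith [hδ.le]
  set n : ℕ := ⌊(2 : ℝ) ^ j * t⌋₊ with hn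
  have hx0 : (0 : ℝ) ≤ 2 ^ j * t := by positivity
  have hn1 : (n : ℝ) ≤ 2 ^ j * t := Nat.floor_le hx0
  have hn2 : (2 : ℝ) ^ j * t < n + 1 := Nat.lt_floor_add_one _
  have hnlt : n < 2 ^ j := by
    have h : (n : ℝ) < 2 ^ j := lt_of_le_of_lt hn1 (by nlinarith)
    exact_mod_cast h
  set a : ℝ := (n : ℝ) / 2 ^ j with ha
  set b : ℝ := ((n : ℝ) + 1) / 2 ^ j with hb
  have hab : a < b := by
    rw [ha, hb]
    gcongr
    linarith
  have hta : a ≤ t := by rw [ha, div_le_iff₀ h2j]; linarith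
  have htb : t < b := by rw [hb, lt_div_iff₀ h2j]; linarith
  have hb1 : b ≤ 1 := by
    rw [hb, div_le_one h2j]
    have : (n : ℝ) + 1 ≤ (2 : ℝ) ^ j := by
      have : ((n + 1 : ℕ) : ℝ) ≤ ((2 ^ j : ℕ) : ℝ) := by exact_mod_cast hnlt
      push_cast at this; linarith
    linarith
  have ha0 : 0 ≤ a := by positivity
  have hba : b - a = 1 / 2 ^ j := by rw [ha, hb]; ring
  -- collapse the sum
  have hpow : (2 : ℝ) ^ ((j : ℝ) / 2) * 2 ^ ((j : ℝ) / 2) = 2 ^ j := by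
    rw [← Real.rpow_add two_pos]
    rw [show (j : ℝ) / 2 + (j : ℝ) / 2 = (j : ℕ) by push_cast; ring]
    exact Real.rpow_natCast 2 j
  have hsum : (∑ k ∈ Finset.range (2 ^ j),
      (2 ^ ((j : ℝ) / 2) * ∫ s in ((k : ℝ) / 2 ^ j)..(((k : ℝ) + 1) / 2 ^ j), f s)
        * phiJK j (k : ℤ) t)
      = 2 ^ j * ∫ s in a..b, f s := by
    rw [Finset.sum_eq_single_of_mem n (Finset.mem_range.2 hnlt)]
    · unfold phiJK haarPhi
      rw [if_pos]
      · rw [mul_one]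
        linear_combination (∫ s in a..b, f s) * hpow
      · constructor
        · push_cast; linarith
        · push_cast; linarith
    · intro k hk hkn
      unfold phiJK haarPhi
      rw [if_neg, mul_zero, mul_zero]
      push_cast
      rintro ⟨h1, h2⟩
      rcases lt_or_gt_of_ne hkn with hlt | hgt
      · have : (k : ℝ) + 1 ≤ n := by exact_mod_cast hlt
        linarith
      · have : (n : ℝ) + 1 ≤ k := by exact_mod_cast hgt
        linarith
  rw [hsum]
  -- estimate
  have hsub : Set.uIcc a b ⊆ Set.Icc (0 : ℝ) 1 := by
    rw [Set.uIcc_of_le hab.le]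
    exact Set.Icc_subset_Icc ha0 hb1
  have hint : IntervalIntegrable f volume a b := (hf.mono hsub).intervalIntegrable
  have hintc : IntervalIntegrable (fun _ : ℝ => f t) volume a b :=
    intervalIntegrable_const
  have hbound : ‖∫ s in a..b, (f s - f t)‖ ≤ ε / 2 * |b - a| := by
    apply intervalIntegral.norm_integral_le_of_norm_le_const
    intro x hx
    rw [Set.uIoc_of_le hab.le] at hx
    obtain ⟨hxa, hxb⟩ := hx
    have hx01 : x ∈ Set.Icc (0 : ℝ) 1 := ⟨by linarith, by linarith⟩
    have ht01 : t ∈ Set.Icc (0 : ℝ) 1 := ⟨ht0, by linarith⟩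
    have hdist : dist x t < δ := by
      rw [Real.dist_eq]
      rw [abs_lt]
      constructor <;> [linarith [hsmall, hba] ; linarith [hsmall, hba]]
    exact (hδf x hx01 t ht01 hdist).le
  have hsplit : (∫ s in a..b, (f s - f t)) = (∫ s in a..b, f s) - (b - a) * f t := by
    rw [intervalIntegral.integral_sub hint hintc, intervalIntegral.integral_const,
      smul_eq_mul]
  rw [Real.dist_eq]
  have key : f t - 2 ^ j * ∫ s in a..b, f s = -(2 ^ j * ∫ s in a..b, (f s - f t)) := by
    rw [hsplit, hba]
    field_simp
    ring
  rw [key, abs_neg, abs_mul, abs_of_pos h2j]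
  rw [Real.norm_eq_abs] at hbound
  have habs : |b - a| = 1 / 2 ^ j := by rw [hba]; exact abs_of_pos (by positivity)
  rw [habs] at hbound
  calc 2 ^ j * |∫ s in a..b, (f s - f t)| ≤ 2 ^ j * (ε / 2 * (1 / 2 ^ j)) :=
        mul_le_mul_of_nonneg_left hbound h2j.le
    _ = ε / 2 := by field_simp
    _ < ε := by linarith
end

section
/- Causality of the multiresolution convolution with left zero-padding: if the recursion a_j(n) = Σ_{k=0}^{K−1} ã_{j+1}(2n+k) h₀(k) uses left zero-padding (ã_{j+1} is a_{j+1} shifted right by the pad amount), then for two inputs x, x' ∈ ℝ^N agreeing on indices 0,…,t, the resulting memory vectors z_t (formed by the resolution-fading selection of the last coefficient at each level) agree; i.e., the output at time t depends only on x(0:t). -/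
/-- Dilated causal convolution with dilation `d` and a length-`K` filter `h`
(left zero-padding corresponds to evaluating the input at indices `n - d·k ≤ n`). -/
noncomputable def dilatedCausalConv (K : ℕ) (d : ℤ) (h : ℕ → ℝ) (a : ℤ → ℝ) : ℤ → ℝ :=
  fun n => ∑ k ∈ Finset.range K, h k * a (n - d * (k : ℤ))

/-- The approximation coefficients of the causal multiresolution convolution:
`A 0 = x`, `A (j+1) = dilated causal conv of `A j` with dilation `2^j`. -/
noncomputable def multiresA (K : ℕ) (h0 : ℕ → ℝ) (x : ℤ → ℝ) : ℕ → ℤ → ℝ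
  | 0 => x
  | j + 1 => dilatedCausalConv K ((2 : ℤ) ^ j) h0 (multiresA K h0 x j)

lemma multiresA_agree (K : ℕ) (h0 : ℕ → ℝ) (x x' : ℤ → ℝ) (t : ℤ)
    (hagree : ∀ n : ℤ, n ≤ t → x n = x' n) :
    ∀ j, ∀ n ≤ t, multiresA K h0 x j n = multiresA K h0 x' j n := by
  intro j
  induction j with
  | zero => exact fun n hn => hagree n hn
  | succ j ih =>
    intro n hn
    simp only [multiresA, dilatedCausalConv]
    refine Finset.sum_congr rfl fun k _ => ?_
    rw [ih (n - 2 ^ j * (k : ℤ)) ?_]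
    have : (0:ℤ) ≤ 2 ^ j * (k : ℤ) := by positivity
    omega

/-- Causality of the multiresolution convolution with left zero-padding: if two inputs
agree on all indices up to `t`, then the resolution-fading memory vectors `z_t`
(the last approximation coefficient and the last detail coefficient at every level,
together with `x(t)` itself) agree; i.e. the output at time `t` depends only on
`x(0:t)`. -/
theorem multires_causality (K : ℕ) (h0 h1 : ℕ → ℝ) (x x' : ℤ → ℝ) (t : ℤ)
    (hagree : ∀ n : ℤ, n ≤ t → x n = x' n) (J : ℕ) :
    (∀ j ≤ J, multiresA K h0 x j t = multiresA K h0 x' j t) ∧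
    (∀ j < J, dilatedCausalConv K ((2 : ℤ) ^ j) h1 (multiresA K h0 x j) t
      = dilatedCausalConv K ((2 : ℤ) ^ j) h1 (multiresA K h0 x' j) t) ∧
    x t = x' t := by
  refine ⟨fun j _ => multiresA_agree K h0 x x' t hagree j t le_rfl, fun j _ => ?_, hagree t le_rfl⟩
  simp only [dilatedCausalConv]
  refine Finset.sum_congr rfl fun k _ => ?_
  rw [multiresA_agree K h0 x x' t hagree j (t - 2 ^ j * (k : ℤ)) ?_]
  have : (0:ℤ) ≤ 2 ^ j * (k : ℤ) := by positivity
  omega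
end
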